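/- Let J₁,…,J_m be nonempty subsets of {1,…,d}, let F₁,…,F_d and H₁,…,H_m be cumulative distribution functions on ℝ, and let s ∈ ℝ. Let α = (α₁,…,α_m) ∈ ℝ₊^m satisfy Σ_{n=1}^m αₙ min_{j∈Jₙ} xⱼ ≥ Σ_{i=1}^d xᵢ for all x ∈ ℝ₋^d. Then for every probability measure μ on ℝ^d that is concentrated on the nonpositive orthant, i.e. μ(ℝ₋^d) = 1, with μ{x : xᵢ ≤ t} = Fᵢ(t) for all t ∈ ℝ and i = 1,…,d, and μ{x : min_{j∈Jₙ} xⱼ ≤ t} = Hₙ(t) for all t ∈ ℝ and n = 1,…,m, it holds that μ{x ∈ ℝ^d : Σ_{i=1}^d xᵢ ≤ s} ≥ inf{ν{z ∈ ℝ^m : Σ_{n=1}^m αₙ zₙ ≤ s} : ν a probability measure on ℝ^m with ν{z : zₙ ≤ t} = Hₙ(t) for all t ∈ ℝ, n = 1,…,m}. -/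

import Mathlib

open MeasureTheory Filter

noncomputable section

/-- The closed unit cube in `ℝ^d`. -/
def unitCube (d : ℕ) : Set (Fin d → ℝ) := {u | ∀ i, u i ∈ Set.Icc (0 : ℝ) 1}

/-- A `d`-quasi-copula (conditions imposed on the unit cube). -/
def IsQuasiCopula (d : ℕ) (Q : (Fin d → ℝ) → ℝ) : Prop :=
  (∀ u ∈ unitCube d, Q u ∈ Set.Icc (0 : ℝ) 1) ∧
  (∀ u ∈ unitCube d, (∃ i, u i = 0) → Q u = 0) ∧
  (∀ (i : Fin d), ∀ t ∈ Set.Icc (0 : ℝ) 1, Q (fun j => if j = i then t else 1) = t) ∧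
  (∀ u ∈ unitCube d, ∀ v ∈ unitCube d, (∀ i, u i ≤ v i) → Q u ≤ Q v) ∧
  (∀ u ∈ unitCube d, ∀ v ∈ unitCube d, |Q u - Q v| ≤ ∑ i, |u i - v i|)

/-- The `C`-volume of the box `(a, b]`, via the alternating sum over the vertices. -/
def boxVolume (d : ℕ) (C : (Fin d → ℝ) → ℝ) (a b : Fin d → ℝ) : ℝ :=
  ∑ ε : Fin d → Bool,
    (-1 : ℝ) ^ (Finset.univ.filter fun i => ε i).card * C (fun i => if ε i then a i else b i)

/-- A `d`-copula: a `d`-quasi-copula that is `d`-increasing. -/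
def IsCopula (d : ℕ) (C : (Fin d → ℝ) → ℝ) : Prop :=
  IsQuasiCopula d C ∧
  ∀ a ∈ unitCube d, ∀ b ∈ unitCube d, (∀ i, a i ≤ b i) → 0 ≤ boxVolume d C a b

/-- The survival function `Ĉ(u) = V_C([u₁,1] × ⋯ × [u_d,1])` of a `d`-copula `C`. -/
def survivalFn (d : ℕ) (C : (Fin d → ℝ) → ℝ) (u : Fin d → ℝ) : ℝ :=
  ∑ ε : Fin d → Bool,
    (-1 : ℝ) ^ (Finset.univ.filter fun i => ε i).card * C (fun i => if ε i then u i else 1)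

/-- The lower Fréchet–Hoeffding bound `W_d`. -/
def FHlower (d : ℕ) (u : Fin d → ℝ) : ℝ := max 0 ((∑ i, u i) - (d : ℝ) + 1)

/-- The upper Fréchet–Hoeffding bound `M_d`. -/
def FHupper {d : ℕ} (hd : 0 < d) (u : Fin d → ℝ) : ℝ :=
  Finset.univ.inf' ⟨⟨0, hd⟩, Finset.mem_univ _⟩ u

/-- The one-point improved upper Fréchet–Hoeffding bound `Q̄^{u,α}`. -/
def Qup {d : ℕ} (hd : 0 < d) (u : Fin d → ℝ) (α : ℝ) (v : Fin d → ℝ) : ℝ :=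
  min (FHupper hd v) (α + ∑ i, max (v i - u i) 0)

/-- The one-point improved lower Fréchet–Hoeffding bound `Q̲^{u,α}`. -/
def Qlow (d : ℕ) (u : Fin d → ℝ) (α : ℝ) (v : Fin d → ℝ) : ℝ :=
  max (FHlower d v) (α - ∑ i, max (u i - v i) 0)

/-- The Kolmogorov–Smirnov distance on the unit cube. -/
def DKS (d : ℕ) (Q Q' : (Fin d → ℝ) → ℝ) : ℝ :=
  sSup ((fun v => |Q v - Q' v|) '' unitCube d)

/-- reduction-principle lower bound using distributions of partial minima,
for nonpositive risks. -/
theorem reduction_lower_min {d m : ℕ}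
    (J : Fin m → Finset (Fin d)) (hJ : ∀ n, (J n).Nonempty)
    (F : Fin d → ℝ → ℝ) (H : Fin m → ℝ → ℝ) (s : ℝ)
    (α : Fin m → ℝ) (hα : ∀ n, 0 ≤ α n)
    (hαB : ∀ x : Fin d → ℝ, (∀ i, x i ≤ 0) →
      ∑ i, x i ≤ ∑ n, α n * (J n).inf' (hJ n) x)
    (μ : Measure (Fin d → ℝ)) [IsProbabilityMeasure μ]
    (hμneg : μ {x | ∀ i, x i ≤ 0} = 1)
    (hμF : ∀ i t, (μ {x | x i ≤ t}).toReal = F i t)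
    (hμH : ∀ n t, (μ {x | (J n).inf' (hJ n) x ≤ t}).toReal = H n t) :
    sInf {r : ℝ | ∃ ν : Measure (Fin m → ℝ), IsProbabilityMeasure ν ∧
        (∀ n t, (ν {z | z n ≤ t}).toReal = H n t) ∧
        r = (ν {z | ∑ n, α n * z n ≤ s}).toReal} ≤
      (μ {x | ∑ i, x i ≤ s}).toReal := by
  classical
  set f : (Fin d → ℝ) → (Fin m → ℝ) := fun x n => (J n).inf' (hJ n) x with hfdef
  have hfc : ∀ n, Continuous fun x : Fin d → ℝ => (J n).inf' (hJ n) x := by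
    intro n
    exact Continuous.finset_inf'_apply (hJ n) fun i _ => continuous_apply i
  have hfm : Measurable f :=
    measurable_pi_lambda _ fun n => (hfc n).measurable
  set ν : Measure (Fin m → ℝ) := μ.map f with hν
  have hνprob : IsProbabilityMeasure ν := Measure.isProbabilityMeasure_map hfm.aemeasurable
  have hmargin : ∀ n t, (ν {z | z n ≤ t}).toReal = H n t := by
    intro n t
    rw [hν, Measure.map_apply hfm (measurableSet_le (measurable_pi_apply n) measurable_const)]
    exact hμH n t
  have hSmeas : MeasurableSet {z : Fin m → ℝ | ∑ n, α n * z n ≤ s} :=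
    measurableSet_le (Finset.measurable_sum _ fun n _ =>
      (by fun_prop : Measurable fun z : Fin m → ℝ => α n * z n)) measurable_const
  have hNmeas : MeasurableSet {x : Fin d → ℝ | ∀ i, x i ≤ 0} := by
    have : {x : Fin d → ℝ | ∀ i, x i ≤ 0} = ⋂ i, {x | x i ≤ 0} := by
      ext x; simp [Set.mem_iInter]
    rw [this]
    exact MeasurableSet.iInter fun i => measurableSet_le (measurable_pi_apply i) measurable_const
  have hcompl : μ {x : Fin d → ℝ | ∀ i, x i ≤ 0}ᶜ = 0 :=
    (prob_compl_eq_zero_iff hNmeas).mpr hμneg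
  have hle : (ν {z | ∑ n, α n * z n ≤ s}).toReal ≤ (μ {x | ∑ i, x i ≤ s}).toReal := by
    apply ENNReal.toReal_mono (measure_ne_top μ _)
    rw [hν, Measure.map_apply hfm hSmeas]
    calc μ (f ⁻¹' {z | ∑ n, α n * z n ≤ s})
        = μ (f ⁻¹' {z | ∑ n, α n * z n ≤ s} ∩ {x | ∀ i, x i ≤ 0}) :=
          (measure_inter_conull hcompl).symm
      _ ≤ μ {x | ∑ i, x i ≤ s} := by
          apply measure_mono
          rintro x ⟨hx1, hx2⟩
          exact le_trans (hαB x hx2) hx1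
  have hbdd : BddBelow {r : ℝ | ∃ ν : Measure (Fin m → ℝ), IsProbabilityMeasure ν ∧
      (∀ n t, (ν {z | z n ≤ t}).toReal = H n t) ∧
      r = (ν {z | ∑ n, α n * z n ≤ s}).toReal} := by
    refine ⟨0, ?_⟩
    rintro r ⟨ν', _, _, rfl⟩
    exact ENNReal.toReal_nonneg
  have hmem : (ν {z | ∑ n, α n * z n ≤ s}).toReal ∈ {r : ℝ | ∃ ν : Measure (Fin m → ℝ),
      IsProbabilityMeasure ν ∧ (∀ n t, (ν {z | z n ≤ t}).toReal = H n t) ∧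
      r = (ν {z | ∑ n, α n * z n ≤ s}).toReal} := ⟨ν, hνprob, hmargin, rfl⟩
  exact (csInf_le hbdd hmem).trans hle
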